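/- With probability at least 1 - ε over the realization of (D_1,...,D_n), the true target revenue R satisfies R ≥ R̂(w) - Bern(w, r), where Bern(w,r) := b(w)^T (r - r̂) + sqrt(2 Var(w,r) log(1/ε)) + (1/(3n)) max_{1≤i≤n} |w_i| p_i log(1/ε). -/

import Mathlib

open MeasureTheory ProbabilityTheory Finset

-- exp u ≤ 1 + u + u^2/2 for u ≤ 0
private lemma exp_le_quad_of_nonpos {u : ℝ} (hu : u ≤ 0) : Real.exp u ≤ 1 + u + u^2/2 := by
  set f : ℝ → ℝ := fun x => 1 + x + x^2/2 - Real.exp x with hf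
  have hd : ∀ x, HasDerivAt f (1 + x - Real.exp x) x := by
    intro x
    have h1 : HasDerivAt (fun x : ℝ => 1 + x + x^2/2) (1 + x) x := by
      have := ((hasDerivAt_id x).const_add (1:ℝ)).add ((hasDerivAt_pow 2 x).div_const 2)
      refine this.congr_deriv ?_; push_cast; ring
    exact h1.sub (Real.hasDerivAt_exp x)
  have hanti : Antitone f := by
    apply antitone_of_deriv_nonpos
    · exact fun x => (hd x).differentiableAt
    · intro x
      rw [(hd x).deriv]
      have := Real.add_one_le_exp x
      linarith
  have := hanti hu
  simp only [hf] at this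
  simp only [Real.exp_zero] at this
  nlinarith [this]

private lemma bernstein_h_nonneg {u : ℝ} (hu : 0 ≤ u) :
    0 ≤ u^2/2 - (1 - u/3) * (Real.exp u - 1 - u) := by
  set h1 : ℝ → ℝ := fun x => x/3 + Real.exp x * (x-2)/3 + 2/3 with hh1
  have hd1 : ∀ x, HasDerivAt h1 (1/3 + Real.exp x * (x-1)/3) x := by
    intro x
    have := (((hasDerivAt_id x).div_const 3).add
      (((Real.hasDerivAt_exp x).mul ((hasDerivAt_id x).sub_const 2)).div_const 3)).add_const (2/3)
    simp only [id_eq] at this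
    refine this.congr_deriv ?_
    ring
  have h1mono : Monotone h1 := by
    apply monotone_of_deriv_nonneg
    · exact fun x => (hd1 x).differentiableAt
    · intro x
      rw [(hd1 x).deriv]
      have hx1 : (-x) + 1 ≤ Real.exp (-x) := Real.add_one_le_exp _
      have hx2 : Real.exp (-x) * Real.exp x = 1 := by
        rw [← Real.exp_add]; simp
      nlinarith [Real.exp_pos x]
  have h10 : h1 0 = 0 := by simp [hh1, Real.exp_zero]; ring
  have h1nonneg : ∀ x, 0 ≤ x → 0 ≤ h1 x := by
    intro x hx
    have := h1mono hx
    rwa [h10] at this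
  set h : ℝ → ℝ := fun x => x^2/2 - (1 - x/3) * (Real.exp x - 1 - x) with hh
  have hd : ∀ x, HasDerivAt h (h1 x) x := by
    intro x
    have := ((hasDerivAt_pow 2 x).div_const 2).sub
      ((((hasDerivAt_id x).div_const 3).const_sub 1).mul
        (((Real.hasDerivAt_exp x).sub_const 1).sub (hasDerivAt_id x)))
    simp only [id_eq] at this
    refine this.congr_deriv ?_
    simp only [hh1, Pi.sub_apply, id_eq]
    push_cast
    ring
  have hmono : MonotoneOn h (Set.Ici 0) := by
    apply monotoneOn_of_deriv_nonneg (convex_Ici 0)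
    · apply Continuous.continuousOn
      fun_prop
    · intro x _
      exact (hd x).differentiableAt.differentiableWithinAt
    · intro x hx
      rw [interior_Ici] at hx
      rw [(hd x).deriv]
      exact h1nonneg x (le_of_lt hx)
  have := hmono (Set.self_mem_Ici) hu hu
  have hzero : h 0 = 0 := by simp [hh]
  rw [hzero] at this
  exact this

private lemma psi_le {u A : ℝ} (huA : u ≤ A) (hA0 : 0 ≤ A) (hA3 : A < 3) :
    Real.exp u - 1 - u ≤ u^2 / (2*(1-A/3)) := by
  have hc : 0 < 2*(1-A/3) := by linarith
  rcases le_or_gt u 0 with hu | hu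
  · have h2 := exp_le_quad_of_nonpos hu
    rw [le_div_iff₀ hc]
    nlinarith [sq_nonneg u]
  · have h1 := bernstein_h_nonneg hu.le
    have hu3 : 0 < 2*(1-u/3) := by linarith
    rw [le_div_iff₀ hc]
    nlinarith [sq_nonneg u, Real.add_one_le_exp u]

private lemma two_point_bound {q a b A : ℝ} (hq0 : 0 ≤ q) (hq1 : q ≤ 1)
    (hmean : (1-q)*a + q*b = 0) (ha : a ≤ A) (hb : b ≤ A) (hA0 : 0 ≤ A) (hA3 : A < 3) :
    (1-q)*Real.exp a + q*Real.exp b ≤ Real.exp (((1-q)*a^2 + q*b^2) / (2*(1-A/3))) := by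
  have hc : 0 < 2*(1-A/3) := by linarith
  have hψa := psi_le ha hA0 hA3
  have hψb := psi_le hb hA0 hA3
  have t1 : (1-q)*(Real.exp a - 1 - a) ≤ (1-q)*(a^2/(2*(1-A/3))) :=
    mul_le_mul_of_nonneg_left hψa (by linarith)
  have t2 : q*(Real.exp b - 1 - b) ≤ q*(b^2/(2*(1-A/3))) :=
    mul_le_mul_of_nonneg_left hψb hq0
  have e2 : ((1-q)*a^2 + q*b^2)/(2*(1-A/3))
      = (1-q)*(a^2/(2*(1-A/3))) + q*(b^2/(2*(1-A/3))) := by ring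
  have key : (1-q)*Real.exp a + q*Real.exp b ≤ 1 + ((1-q)*a^2 + q*b^2)/(2*(1-A/3)) := by
    have e1 : (1-q)*Real.exp a + q*Real.exp b =
        1 + ((1-q)*(Real.exp a - 1 - a) + q*(Real.exp b - 1 - b)) + ((1-q)*a + q*b) := by ring
    rw [e1, hmean, e2]
    linarith
  have := Real.add_one_le_exp (((1-q)*a^2 + q*b^2)/(2*(1-A/3)))
  linarith

private lemma mgf_single {Ω : Type*} [MeasurableSpace Ω] (μ : Measure Ω) [IsProbabilityMeasure μ]
    (t wi pi ri MM : ℝ) (ht : 0 < t) (hpi : 0 < pi) (hr0 : 0 ≤ ri) (hrp : ri ≤ pi)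
    (hwM : |wi| * pi ≤ MM) (htM : t * MM < 3)
    (Di : Ω → ℝ) (hDmeas : Measurable Di) (hDbern : ∀ ω, Di ω = 0 ∨ Di ω = 1)
    (hDmean : ∫ ω, Di ω ∂μ = ri / pi) :
    mgf (fun ω => wi * (pi * Di ω - ri)) μ t ≤
      Real.exp (t^2 * (wi^2*ri*(pi - ri)) / (2*(1 - t*MM/3))) := by
  have hDint : Integrable Di μ :=
    Integrable.mono' (integrable_const 1) hDmeas.aestronglyMeasurable
      (Filter.Eventually.of_forall fun ω => by rcases hDbern ω with h|h <;> simp [h])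
  have hpt : ∀ ω, Real.exp (t * (wi * (pi * Di ω - ri))) =
      Real.exp (-(t*wi*ri)) + Di ω * (Real.exp (t*wi*(pi-ri)) - Real.exp (-(t*wi*ri))) := by
    intro ω; rcases hDbern ω with h|h <;> rw [h]
    · rw [show t * (wi * (pi * 0 - ri)) = -(t*wi*ri) by ring]; ring
    · rw [show t * (wi * (pi * 1 - ri)) = t*wi*(pi-ri) by ring]; ring
  have hMM0 : 0 ≤ MM := le_trans (by positivity) hwM
  have hmgf_eq : mgf (fun ω => wi * (pi * Di ω - ri)) μ t =
      (1 - ri/pi)*Real.exp (-(t*wi*ri)) + (ri/pi)*Real.exp (t*wi*(pi-ri)) := by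
    rw [mgf]
    simp only [hpt]
    rw [integral_add (integrable_const _) (hDint.mul_const _), integral_const,
      integral_mul_const, hDmean]
    simp [measure_univ]
    ring
  rw [hmgf_eq]
  have hq0 : 0 ≤ ri/pi := div_nonneg hr0 hpi.le
  have hq1 : ri/pi ≤ 1 := (div_le_one hpi).mpr hrp
  have hmean0 : (1 - ri/pi)*(-(t*wi*ri)) + (ri/pi)*(t*wi*(pi-ri)) = 0 := by
    field_simp
    ring
  have hwr : |wi| * ri ≤ MM :=
    le_trans (mul_le_mul_of_nonneg_left hrp (abs_nonneg wi)) hwM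
  have hwpr : |wi| * (pi - ri) ≤ MM :=
    le_trans (mul_le_mul_of_nonneg_left (by linarith) (abs_nonneg wi)) hwM
  have ha : -(t*wi*ri) ≤ t*MM := by
    calc -(t*wi*ri) ≤ |t*wi*ri| := neg_le_abs _
    _ = t * (|wi| * ri) := by
        rw [abs_mul, abs_mul, abs_of_nonneg ht.le, abs_of_nonneg hr0]; ring
    _ ≤ t * MM := mul_le_mul_of_nonneg_left hwr ht.le
  have hb : t*wi*(pi-ri) ≤ t*MM := by
    calc t*wi*(pi-ri) ≤ |t*wi*(pi-ri)| := le_abs_self _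
    _ = t * (|wi| * (pi - ri)) := by
        rw [abs_mul, abs_mul, abs_of_nonneg ht.le,
          abs_of_nonneg (by linarith : (0:ℝ) ≤ pi - ri)]
        ring
    _ ≤ t * MM := mul_le_mul_of_nonneg_left hwpr ht.le
  have hA0 : 0 ≤ t*MM := by positivity
  have h2p := two_point_bound hq0 hq1 hmean0 ha hb hA0 htM
  refine h2p.trans (le_of_eq ?_)
  congr 1
  rw [show (1 - ri/pi)*(-(t*wi*ri))^2 + (ri/pi)*(t*wi*(pi-ri))^2 = t^2*(wi^2*ri*(pi-ri)) from by
    field_simp; ring]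

theorem stmt_2 {Ω : Type*} [MeasurableSpace Ω] (μ : Measure Ω) [IsProbabilityMeasure μ]
    (n : ℕ) (hn : 1 ≤ n) (ε : ℝ) (hε0 : 0 < ε) (hε1 : ε < 1)
    (p r rhat w : ℕ → ℝ)
    (hp : ∀ i < 2 * n, 0 < p i)
    (hbox : ∀ i < 2 * n, 0 ≤ r i ∧ r i ≤ p i)
    (D : ℕ → Ω → ℝ)
    (hmeas : ∀ i < n, Measurable (D i))
    (hindep : iIndepFun (fun i : Fin n => D i) μ)
    (hbern : ∀ i < n, ∀ ω, D i ω = 0 ∨ D i ω = 1)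
    (hmean : ∀ i < n, ∫ ω, D i ω ∂μ = r i / p i) :
    ENNReal.ofReal (1 - ε) ≤
      μ {ω | ((1 : ℝ) / n) * ∑ i ∈ range n, r (n + i) ≥
        (((1 : ℝ) / n) * ∑ i ∈ range n, w i * (p i * D i ω - rhat i)
          + ((1 : ℝ) / n) * ∑ i ∈ range n, rhat (n + i))
        - ((((1 : ℝ) / n) * ∑ i ∈ range n, w i * (r i - rhat i)
              - ((1 : ℝ) / n) * ∑ i ∈ range n, (r (n + i) - rhat (n + i)))
            + Real.sqrt (2 * (((1 : ℝ) / (n : ℝ) ^ 2) *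
                ∑ i ∈ range n, (w i) ^ 2 * r i * (p i - r i)) * Real.log (1 / ε))
            + (1 / (3 * (n : ℝ))) * (⨆ i : Fin n, |w (i : ℕ)| * p (i : ℕ)) *
                Real.log (1 / ε))} := by
  have hn' : (0:ℝ) < (n:ℝ) := by exact_mod_cast hn
  have hi2 : ∀ i, i < n → i < 2*n := by omega
  set L : ℝ := Real.log (1/ε) with hLdef
  have hL : 0 < L := Real.log_pos (by rw [lt_div_iff₀ hε0]; linarith)
  set V : ℝ := ∑ i ∈ range n, (w i)^2 * r i * (p i - r i) with hVdef
  have hVterm : ∀ i ∈ range n, 0 ≤ (w i)^2 * r i * (p i - r i) := by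
    intro i hi
    obtain ⟨h1, h2⟩ := hbox i (hi2 i (mem_range.mp hi))
    have h3 := sq_nonneg (w i)
    have h4 : (0:ℝ) ≤ p i - r i := by linarith
    positivity
  have hV0 : 0 ≤ V := Finset.sum_nonneg hVterm
  set M : ℝ := ⨆ i : Fin n, |w (i:ℕ)| * p (i:ℕ) with hMdef
  have hMle : ∀ i : Fin n, |w (i:ℕ)| * p (i:ℕ) ≤ M := by
    intro i
    rw [hMdef]
    exact le_ciSup (f := fun j : Fin n => |w (j:ℕ)| * p (j:ℕ))
      (Set.Finite.bddAbove (Set.finite_range _)) i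
  have hM0 : 0 ≤ M := by
    have hp0 := hp 0 (by omega)
    exact le_trans (mul_nonneg (abs_nonneg (w 0)) hp0.le) (hMle ⟨0, hn⟩)
  set S : Ω → ℝ := fun ω => ∑ i ∈ range n, w i * (p i * D i ω - r i) with hSdef
  set σ : ℝ := Real.sqrt (2*V*L) with hσdef
  have hσ0 : 0 ≤ σ := Real.sqrt_nonneg _
  set T : ℝ := σ + M*L/3 with hTdef
  have hT0 : 0 ≤ T := by
    rw [hTdef]
    exact add_nonneg hσ0 (div_nonneg (mul_nonneg hM0 hL.le) (by norm_num))
  have hDint : ∀ i, i < n → Integrable (D i) μ := fun i hi =>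
    Integrable.mono' (integrable_const 1) (hmeas i hi).aestronglyMeasurable
      (Filter.Eventually.of_forall fun ω => by rcases hbern i hi ω with h|h <;> simp [h])
  -- Step 1: the complement of the tail event is inside the event of the theorem
  have hsub : {ω | T < S ω}ᶜ ⊆ {ω | ((1 : ℝ) / n) * ∑ i ∈ range n, r (n + i) ≥
        (((1 : ℝ) / n) * ∑ i ∈ range n, w i * (p i * D i ω - rhat i)
          + ((1 : ℝ) / n) * ∑ i ∈ range n, rhat (n + i))
        - ((((1 : ℝ) / n) * ∑ i ∈ range n, w i * (r i - rhat i)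
              - ((1 : ℝ) / n) * ∑ i ∈ range n, (r (n + i) - rhat (n + i)))
            + Real.sqrt (2 * (((1 : ℝ) / (n : ℝ) ^ 2) * V) * L)
            + (1 / (3 * (n : ℝ))) * M * L)} := by
    intro ω hω
    simp only [Set.mem_compl_iff, Set.mem_setOf_eq, not_lt] at hω
    simp only [Set.mem_setOf_eq, ge_iff_le]
    rw [hTdef] at hω
    have hsqrt : Real.sqrt (2 * (((1 : ℝ) / (n : ℝ) ^ 2) * V) * L) = σ / (n:ℝ) := by
      rw [hσdef, show 2 * (((1 : ℝ) / (n : ℝ) ^ 2) * V) * L = (2*V*L)/(n:ℝ)^2 by ring,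
        Real.sqrt_div (by positivity), Real.sqrt_sq hn'.le]
    rw [hsqrt]
    have hAC : ∑ i ∈ range n, w i * (p i * D i ω - rhat i)
        = S ω + ∑ i ∈ range n, w i * (r i - rhat i) := by
      simp only [hSdef]
      rw [← Finset.sum_add_distrib]
      exact Finset.sum_congr rfl fun i _ => by ring
    have hDr : ∑ i ∈ range n, (r (n+i) - rhat (n+i))
        = ∑ i ∈ range n, r (n+i) - ∑ i ∈ range n, rhat (n+i) := Finset.sum_sub_distrib _ _
    rw [hAC, hDr]
    have hmul : (1/(n:ℝ)) * (S ω) ≤ (1/(n:ℝ)) * (σ + M*L/3) :=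
      mul_le_mul_of_nonneg_left hω (by positivity)
    have h3n : 1/(3*(n:ℝ))*M*L = 1/(n:ℝ) * (M*L/3) := by
      rw [one_div, one_div, mul_inv]
      ring
    have hsn : σ/(n:ℝ) = 1/(n:ℝ) * σ := by ring
    linarith [hmul, h3n, hsn]
  -- Step 2: tail bound
  have hcompl : μ {ω | T < S ω} ≤ ENNReal.ofReal ε := by
    rcases eq_or_lt_of_le hV0 with hV | hV
    · -- degenerate case V = 0
      have hterm0 : ∀ i ∈ range n, (w i)^2 * r i * (p i - r i) = 0 :=
        (Finset.sum_eq_zero_iff_of_nonneg hVterm).mp hV.symm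
      have hXae : ∀ i : ℕ, ∀ᵐ ω ∂μ, i ∈ range n → w i * (p i * D i ω - r i) = 0 := by
        intro i
        by_cases hi : i ∈ range n
        swap
        · exact Filter.Eventually.of_forall fun ω h => absurd h hi
        have hin := mem_range.mp hi
        obtain ⟨hr0, hrp⟩ := hbox i (hi2 i hin)
        have hpp := hp i (hi2 i hin)
        by_cases hw : w i = 0
        · exact Filter.Eventually.of_forall fun ω _ => by simp [hw]
        have hprod : r i * (p i - r i) = 0 := by
          have h := hterm0 i hi
          have hw2 : (w i)^2 ≠ 0 := pow_ne_zero _ hw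
          have h' : (w i)^2 * (r i * (p i - r i)) = 0 := by linear_combination h
          exact (mul_eq_zero.mp h').resolve_left hw2
        rcases mul_eq_zero.mp hprod with hr | hpr
        · have hD0 : D i =ᵐ[μ] 0 := by
            refine (integral_eq_zero_iff_of_nonneg ?_ (hDint i hin)).mp ?_
            · intro ω; rcases hbern i hin ω with h|h <;> simp [h]
            · rw [hmean i hin, hr, zero_div]
          filter_upwards [hD0] with ω hω _
          simp only [Pi.zero_apply] at hω
          rw [hω, hr]; ring
        · have hrp' : r i = p i := by linarith
          have h1int : ∫ ω, (1 - D i ω) ∂μ = 0 := by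
            rw [integral_sub (integrable_const 1) (hDint i hin), integral_const,
              hmean i hin, hrp', div_self hpp.ne']
            simp
          have hD1 : (fun ω => 1 - D i ω) =ᵐ[μ] 0 := by
            refine (integral_eq_zero_iff_of_nonneg ?_ ?_).mp h1int
            · intro ω; rcases hbern i hin ω with h|h <;> simp [h]
            · exact (integrable_const 1).sub (hDint i hin)
          filter_upwards [hD1] with ω hω _
          simp only [Pi.zero_apply] at hω
          have hone : D i ω = 1 := by linarith
          rw [hone, hrp']; ring
      have hSae : ∀ᵐ ω ∂μ, S ω = 0 := by
        have hall := MeasureTheory.ae_all_iff.mpr hXae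
        filter_upwards [hall] with ω hω
        simp only [hSdef]
        exact Finset.sum_eq_zero fun i hi => hω i hi
      have h0 : μ {ω | ¬ (S ω = 0)} = 0 := ae_iff.mp hSae
      refine le_trans (le_trans (measure_mono ?_) h0.le) zero_le
      intro ω hω
      simp only [Set.mem_setOf_eq] at hω ⊢
      intro h
      rw [h] at hω
      linarith
    · -- main case V > 0
      have hex : ∃ i ∈ range n, (w i)^2*r i*(p i - r i) ≠ 0 := by
        by_contra hcon
        push_neg at hcon
        exact absurd (hVdef.trans (Finset.sum_eq_zero hcon)) hV.ne'
      obtain ⟨i0, hi0, hne0⟩ := hex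
      have hM : 0 < M := by
        have hw0 : w i0 ≠ 0 := fun h => hne0 (by simp [h])
        have hp0 := hp i0 (hi2 i0 (mem_range.mp hi0))
        calc (0:ℝ) < |w i0| * p i0 := by positivity
        _ ≤ M := hMle ⟨i0, mem_range.mp hi0⟩
      have hσp : 0 < σ := Real.sqrt_pos.mpr (by positivity)
      have hσM : 0 ≤ σ*M := mul_nonneg hσ0 hM0
      have hd : (0:ℝ) < 3*V + σ*M := by linarith
      set t : ℝ := 3*σ/(3*V + σ*M) with htdef
      have ht : 0 < t := by positivity
      have htM3 : t*M < 3 := by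
        rw [htdef, div_mul_eq_mul_div, div_lt_iff₀ hd]
        linarith
      have h1m : 0 < 1 - t*M/3 := by linarith
      set Y : Fin n → Ω → ℝ := fun i ω => w (i:ℕ) * (p (i:ℕ) * D (i:ℕ) ω - r (i:ℕ)) with hYdef
      have hYmeas : ∀ i : Fin n, Measurable (Y i) := fun i =>
        (((hmeas i i.2).const_mul (p (i:ℕ))).sub_const (r (i:ℕ))).const_mul (w (i:ℕ))
      have hindep' : iIndepFun Y μ := by
        have := hindep.comp (fun i : Fin n => fun x : ℝ => w (i:ℕ) * (p (i:ℕ) * x - r (i:ℕ)))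
          (fun i => by fun_prop)
        exact this
      have hprod := hindep'.mgf_sum hYmeas Finset.univ (t := t)
      have hsum_eq : (∑ i : Fin n, Y i) = S := by
        funext ω
        rw [Finset.sum_apply]
        simp only [hYdef, hSdef]
        exact Fin.sum_univ_eq_sum_range (fun k => w k * (p k * D k ω - r k)) n
      have hmgf_le : mgf S μ t ≤ Real.exp (t^2 * V / (2*(1 - t*M/3))) := by
        rw [← hsum_eq, hprod]
        have hle : ∀ i : Fin n, mgf (Y i) μ t ≤
            Real.exp (t^2 * ((w (i:ℕ))^2*r (i:ℕ)*(p (i:ℕ) - r (i:ℕ))) / (2*(1 - t*M/3))) := by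
          intro i
          have hin := i.2
          obtain ⟨hr0, hrp⟩ := hbox i (hi2 i hin)
          exact mgf_single μ t (w (i:ℕ)) (p (i:ℕ)) (r (i:ℕ)) M ht (hp i (hi2 i hin)) hr0 hrp
            (hMle i) htM3 (D (i:ℕ)) (hmeas i hin) (hbern i hin) (hmean i hin)
        calc ∏ i : Fin n, mgf (Y i) μ t
            ≤ ∏ i : Fin n, Real.exp (t^2 * ((w (i:ℕ))^2*r (i:ℕ)*(p (i:ℕ) - r (i:ℕ)))
                / (2*(1 - t*M/3))) :=
          Finset.prod_le_prod (fun i _ => mgf_nonneg) (fun i _ => hle i)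
        _ = Real.exp (∑ i : Fin n, t^2 * ((w (i:ℕ))^2*r (i:ℕ)*(p (i:ℕ) - r (i:ℕ)))
                / (2*(1 - t*M/3))) := (Real.exp_sum _ _).symm
        _ = Real.exp (t^2 * V / (2*(1 - t*M/3))) := by
            rw [← Finset.sum_div, ← Finset.mul_sum,
              Fin.sum_univ_eq_sum_range (fun k => (w k)^2*r k*(p k - r k)) n, ← hVdef]
      have hSmeas : Measurable S := by
        apply Finset.measurable_sum
        intro i hi
        exact (((hmeas i (mem_range.mp hi)).const_mul (p i)).sub_const (r i)).const_mul (w i)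
      have hXle : ∀ i ∈ range n, ∀ ω, w i * (p i * D i ω - r i) ≤ |w i| * p i := by
        intro i hi ω
        obtain ⟨hr0, hrp⟩ := hbox i (hi2 i (mem_range.mp hi))
        have hpp := hp i (hi2 i (mem_range.mp hi))
        rcases hbern i (mem_range.mp hi) ω with h|h <;> rw [h]
        · calc w i * (p i * 0 - r i) = -(w i * r i) := by ring
          _ ≤ |w i * r i| := neg_le_abs _
          _ = |w i| * r i := by rw [abs_mul, abs_of_nonneg hr0]
          _ ≤ |w i| * p i := mul_le_mul_of_nonneg_left hrp (abs_nonneg _)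
        · calc w i * (p i * 1 - r i) ≤ |w i * (p i * 1 - r i)| := le_abs_self _
          _ = |w i| * (p i - r i) := by
              rw [abs_mul, abs_of_nonneg (by linarith : (0:ℝ) ≤ p i * 1 - r i)]
              ring
          _ ≤ |w i| * p i := mul_le_mul_of_nonneg_left (by linarith) (abs_nonneg _)
      have hSle : ∀ ω, S ω ≤ ∑ i ∈ range n, |w i| * p i := fun ω =>
        Finset.sum_le_sum fun i hi => hXle i hi ω
      have hint : Integrable (fun ω => Real.exp (t * S ω)) μ := by
        refine Integrable.mono' (integrable_const (Real.exp (t * ∑ i ∈ range n, |w i| * p i)))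
          ((hSmeas.const_mul t).exp.aestronglyMeasurable) ?_
        refine Filter.Eventually.of_forall fun ω => ?_
        rw [Real.norm_eq_abs, abs_of_pos (Real.exp_pos _)]
        exact Real.exp_le_exp.mpr (mul_le_mul_of_nonneg_left (hSle ω) ht.le)
      have hch := measure_ge_le_exp_mul_mgf (μ := μ) (X := S) T ht.le hint
      have hσ2 : σ^2 = 2*V*L := Real.sq_sqrt (by positivity)
      have hexpeq : -t * T + t^2 * V / (2*(1 - t*M/3)) = -L := by
        rw [hTdef, htdef]
        have h1m' : 1 - (3*σ/(3*V+σ*M))*M/3 = 3*V/(3*V+σ*M) := by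
          field_simp
          ring
        rw [h1m']
        have key : -(3*σ/(3*V+σ*M)) * (σ + M*L/3)
            + (3*σ/(3*V+σ*M))^2 * V / (2*(3*V/(3*V+σ*M)))
            = -(3*σ^2/2 + σ*M*L)/(3*V+σ*M) := by
          field_simp
          ring
        rw [key, hσ2]
        field_simp
      have hexp : Real.exp (-t * T) * Real.exp (t^2 * V / (2*(1 - t*M/3))) = ε := by
        rw [← Real.exp_add, hexpeq, hLdef, one_div, Real.log_inv, neg_neg, Real.exp_log hε0]
      have htail : (μ {ω | T ≤ S ω}).toReal ≤ ε := by
        refine le_trans hch ?_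
        rw [← hexp]
        exact mul_le_mul_of_nonneg_left hmgf_le (Real.exp_pos _).le
      have hT' : μ {ω | T ≤ S ω} ≤ ENNReal.ofReal ε :=
        (ENNReal.le_ofReal_iff_toReal_le (measure_ne_top μ _) hε0.le).mpr htail
      exact le_trans (measure_mono fun ω (hω : T < S ω) => hω.le) hT'
  -- Step 3: conclude
  refine le_trans ?_ (measure_mono hsub)
  have huni : (1:ENNReal) ≤ μ {ω | T < S ω} + μ ({ω | T < S ω}ᶜ) := by
    rw [← measure_univ (μ := μ), ← Set.union_compl_self {ω | T < S ω}]
    exact measure_union_le _ _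
  have h1 : (1:ENNReal) ≤ ENNReal.ofReal ε + μ ({ω | T < S ω}ᶜ) :=
    le_trans huni (add_le_add_left hcompl _)
  have hsum1 : ENNReal.ofReal (1-ε) + ENNReal.ofReal ε = 1 := by
    rw [← ENNReal.ofReal_add (by linarith) hε0.le]
    norm_num
  have h2 : ENNReal.ofReal (1-ε) + ENNReal.ofReal ε ≤ μ ({ω | T < S ω}ᶜ) + ENNReal.ofReal ε := by
    rw [hsum1, add_comm]
    exact h1
  exact (ENNReal.add_le_add_iff_right ENNReal.ofReal_ne_top).mp h2
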